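/- Let d ≥ 1 and let m be a real number with −1/2 ≤ m ≤ 1 and m ≠ 0. Let h be a smooth, strictly positive solution on [0,T] of the thin-film equation ∂_t h + div(h ∇Δh) = 0 on 𝕋^d. Then for every t ∈ [0,T], (1/(m(m+1))) (d/dt) ∫_{𝕋^d} h^{m+1} dx + C_m ∫_{𝕋^d} h^{m-2} |∇h|^4 dx ≤ 0, where C_m = (−2m^2 + m + 1)/9 ≥ 0. -/

import Mathlib

open MeasureTheory Real

/-- Partial derivative `∂ᵢ f` of a function on `ℝᵈ` (as `EuclideanSpace`). -/
noncomputable def pder {d : ℕ} (i : Fin d) (f : EuclideanSpace ℝ (Fin d) → ℝ)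
    (x : EuclideanSpace ℝ (Fin d)) : ℝ :=
  fderiv ℝ f x (EuclideanSpace.single i 1)

/-- The Laplacian `Δ f = ∑ᵢ ∂ᵢ∂ᵢ f`. -/
noncomputable def lap {d : ℕ} (f : EuclideanSpace ℝ (Fin d) → ℝ)
    (x : EuclideanSpace ℝ (Fin d)) : ℝ :=
  ∑ i, pder i (pder i f) x

/-- Squared norm of the gradient, `|∇f|² = ∑ᵢ (∂ᵢ f)²`. -/
noncomputable def gradSq {d : ℕ} (f : EuclideanSpace ℝ (Fin d) → ℝ)
    (x : EuclideanSpace ℝ (Fin d)) : ℝ :=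
  ∑ i, (pder i f x) ^ 2

/-- Squared Frobenius norm of the Hessian, `|∇∇f|² = ∑ᵢⱼ (∂ᵢ∂ⱼ f)²`. -/
noncomputable def hessSq {d : ℕ} (f : EuclideanSpace ℝ (Fin d) → ℝ)
    (x : EuclideanSpace ℝ (Fin d)) : ℝ :=
  ∑ i, ∑ j, (pder i (pder j f) x) ^ 2

/-- The fundamental domain `[0,1)^d` of the torus `𝕋^d`. -/
def fundDom (d : ℕ) : Set (EuclideanSpace ℝ (Fin d)) :=
  {x | ∀ i, 0 ≤ x i ∧ x i < 1}

/-- `ℤ^d`-periodicity of a function on `ℝ^d`. -/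
def ZPeriodic {d : ℕ} (f : EuclideanSpace ℝ (Fin d) → ℝ) : Prop :=
  ∀ (x : EuclideanSpace ℝ (Fin d)) (k : Fin d → ℤ),
    f (x + (WithLp.equiv 2 (Fin d → ℝ)).symm (fun i => (k i : ℝ))) = f x


section ThinFilmAux

set_option linter.unusedSectionVars false
set_option linter.unusedVariables false

variable {d : ℕ}

lemma ContDiff.diffb {E F : Type*} [NormedAddCommGroup E] [NormedSpace ℝ E]
    [NormedAddCommGroup F] [NormedSpace ℝ F] {f : E → F}
    (hf : ContDiff ℝ (⊤:ℕ∞) f) : Differentiable ℝ f :=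
  hf.differentiable (by simp)

lemma ContDiff.fderiv_smooth {E F : Type*} [NormedAddCommGroup E] [NormedSpace ℝ E]
    [NormedAddCommGroup F] [NormedSpace ℝ F] {f : E → F}
    (hf : ContDiff ℝ (⊤:ℕ∞) f) : ContDiff ℝ (⊤:ℕ∞) (fderiv ℝ f) :=
  hf.fderiv_right (by exact_mod_cast le_top)

lemma contDiff_pder {f : EuclideanSpace ℝ (Fin d) → ℝ} (hf : ContDiff ℝ (⊤:ℕ∞) f) (i : Fin d) :
    ContDiff ℝ (⊤:ℕ∞) (pder i f) := by
  have h1 : ContDiff ℝ (⊤:ℕ∞) (fderiv ℝ f) := hf.fderiv_smooth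
  exact h1.clm_apply contDiff_const

lemma pder_mul {f g : EuclideanSpace ℝ (Fin d) → ℝ} {x} (i : Fin d)
    (hf : DifferentiableAt ℝ f x) (hg : DifferentiableAt ℝ g x) :
    pder i (fun y => f y * g y) x = pder i f x * g x + f x * pder i g x := by
  unfold pder
  rw [fderiv_fun_mul hf hg]
  simp only [ContinuousLinearMap.add_apply, ContinuousLinearMap.smul_apply, smul_eq_mul]
  ring

lemma pder_rpow {f : EuclideanSpace ℝ (Fin d) → ℝ} {x} (i : Fin d)
    (hf : DifferentiableAt ℝ f x) (hx : 0 < f x) (p : ℝ) :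
    pder i (fun y => f y ^ p) x = p * f x ^ (p-1) * pder i f x := by
  unfold pder
  rw [(hf.hasFDerivAt.rpow_const (Or.inl hx.ne')).fderiv]
  simp [mul_comm, mul_assoc, mul_left_comm]

lemma pder_sum {ι : Type*} (s : Finset ι) (F : ι → EuclideanSpace ℝ (Fin d) → ℝ) {x} (i : Fin d)
    (hF : ∀ j, DifferentiableAt ℝ (F j) x) :
    pder i (fun y => ∑ j ∈ s, F j y) x = ∑ j ∈ s, pder i (F j) x := by
  unfold pder
  rw [fderiv_fun_sum (fun j _ => hF j)]
  simp

lemma ZPeriodic.pder_per {f : EuclideanSpace ℝ (Fin d) → ℝ} (hf : ZPeriodic f)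
    (hsf : ContDiff ℝ (⊤:ℕ∞) f) (i : Fin d) : ZPeriodic (pder i f) := by
  intro x k
  set c := (WithLp.equiv 2 (Fin d → ℝ)).symm (fun i => (k i : ℝ)) with hc
  have hfe : (fun y => f (y + c)) = f := funext fun y => hf y k
  have h1 : HasFDerivAt (fun y => f (y + c)) (fderiv ℝ f (x + c)) x := by
    have h2 := (hsf.diffb (x + c)).hasFDerivAt
    have h3 := h2.comp x ((hasFDerivAt_id x).add_const c)
    simpa [Function.comp_def] using h3
  rw [hfe] at h1
  show fderiv ℝ f (x + c) _ = fderiv ℝ f x _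
  rw [← h1.fderiv]

lemma pder_comm {f : EuclideanSpace ℝ (Fin d) → ℝ} (hf : ContDiff ℝ (⊤:ℕ∞) f) (i j : Fin d)
    (x : EuclideanSpace ℝ (Fin d)) : pder i (pder j f) x = pder j (pder i f) x := by
  have hdf : ∀ y, HasFDerivAt f (fderiv ℝ f y) y :=
    fun y => (hf.diffb y).hasFDerivAt
  have hf' : ContDiff ℝ (⊤:ℕ∞) (fderiv ℝ f) := hf.fderiv_smooth
  have h2 : HasFDerivAt (fderiv ℝ f) (fderiv ℝ (fderiv ℝ f) x) x :=
    (hf'.diffb x).hasFDerivAt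
  have hsym := second_derivative_symmetric hdf h2
  have key : ∀ (v : EuclideanSpace ℝ (Fin d)) (w : EuclideanSpace ℝ (Fin d)),
      fderiv ℝ (fun y => fderiv ℝ f y v) x w = fderiv ℝ (fderiv ℝ f) x w v := by
    intro v w
    rw [fderiv_clm_apply (hf'.diffb x) (differentiableAt_const v)]
    simp
  show fderiv ℝ (pder j f) x _ = fderiv ℝ (pder i f) x _
  unfold pder
  rw [key, key, hsym]

lemma contEval (i : Fin d) : Continuous (fun x : EuclideanSpace ℝ (Fin d) => x i) := by
  exact (continuous_apply i).comp (PiLp.continuous_ofLp 2 _)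

lemma measurableSet_fundDom : MeasurableSet (fundDom d) := by
  have : fundDom d = ⋂ i, ({x : EuclideanSpace ℝ (Fin d) | 0 ≤ x i} ∩ {x | x i < 1}) := by
    ext x; simp [fundDom, Set.mem_iInter, forall_and]
  rw [this]
  exact MeasurableSet.iInter fun i => (measurableSet_le measurable_const (contEval i).measurable).inter
    (measurableSet_lt (contEval i).measurable measurable_const)

lemma fundDom_subset : fundDom d ⊆ Metric.closedBall 0 (Real.sqrt d) := by
  intro x hx
  rw [Metric.mem_closedBall, dist_zero_right, EuclideanSpace.norm_eq]
  have h1 : (∑ i, ‖x i‖^2) ≤ (d : ℝ) := by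
    have : (∑ i, ‖x i‖^2) ≤ ∑ _i : Fin d, (1:ℝ) := Finset.sum_le_sum (fun i _ => by
      have := hx i
      rw [Real.norm_eq_abs, abs_of_nonneg this.1]
      nlinarith [this.1, this.2])
    simpa using this
  exact Real.sqrt_le_sqrt h1

lemma integrableOn_fundDom (f : EuclideanSpace ℝ (Fin d) → ℝ) (hf : Continuous f) :
    IntegrableOn f (fundDom d) := by
  exact ((hf.continuousOn.integrableOn_compact (isCompact_closedBall _ _))).mono_set fundDom_subset

lemma volume_fundDom_lt : volume (fundDom d) < ⊤ :=
  lt_of_le_of_lt (measure_mono fundDom_subset) measure_closedBall_lt_top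

lemma fundDom_eq_fd :
    fundDom d = ZSpan.fundamentalDomain (PiLp.basisFun 2 ℝ (Fin d)) := by
  ext x
  simp [fundDom, ZSpan.fundamentalDomain, Set.mem_Ico, PiLp.basisFun_repr]

lemma lattice_form (l : Submodule.span ℤ (Set.range ⇑(PiLp.basisFun 2 ℝ (Fin d)))) :
    ∃ k : Fin d → ℤ, (l : EuclideanSpace ℝ (Fin d))
      = (WithLp.equiv 2 (Fin d → ℝ)).symm (fun i => (k i : ℝ)) := by
  obtain ⟨c, hc⟩ := (Submodule.mem_span_range_iff_exists_fun ℤ).1 l.2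
  refine ⟨c, ?_⟩
  rw [← hc]
  apply (PiLp.basisFun 2 ℝ (Fin d)).repr.injective
  ext j
  rw [map_sum]
  simp only [map_zsmul, Module.Basis.repr_self]
  rw [PiLp.basisFun_repr]
  simp [Finsupp.single_apply]

lemma periodic_lattice {G : EuclideanSpace ℝ (Fin d) → ℝ} (hG : ZPeriodic G)
    (l : Submodule.span ℤ (Set.range ⇑(PiLp.basisFun 2 ℝ (Fin d))))
    (x : EuclideanSpace ℝ (Fin d)) : G ((l : EuclideanSpace ℝ (Fin d)) + x) = G x := by
  obtain ⟨k, hk⟩ := lattice_form l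
  rw [hk, add_comm]
  exact hG x k

lemma setIntegral_translate {G : EuclideanSpace ℝ (Fin d) → ℝ} (hG : ZPeriodic G)
    (v : EuclideanSpace ℝ (Fin d)) :
    ∫ x in fundDom d, G (x + v) = ∫ x in fundDom d, G x := by
  set b := PiLp.basisFun 2 ℝ (Fin d)
  have hFD : IsAddFundamentalDomain (Submodule.span ℤ (Set.range ⇑b)) (fundDom d) volume := by
    rw [fundDom_eq_fd]; exact ZSpan.isAddFundamentalDomain b volume
  have hmp : MeasurePreserving (fun x : EuclideanSpace ℝ (Fin d) => x + v) volume volume :=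
    measurePreserving_add_right volume v
  have hFD' : IsAddFundamentalDomain (Submodule.span ℤ (Set.range ⇑b))
      ((fun x : EuclideanSpace ℝ (Fin d) => x + v) ⁻¹' fundDom d) volume := by
    refine hFD.preimage_of_equiv hmp.quasiMeasurePreserving (e := id) Function.bijective_id
      (fun l x => ?_)
    exact add_assoc _ x v
  haveI : MeasurableVAdd (Submodule.span ℤ (Set.range ⇑b)) (EuclideanSpace ℝ (Fin d)) :=
    (inferInstance : MeasurableVAdd (Submodule.span ℤ (Set.range ⇑b)).toAddSubgroup
      (EuclideanSpace ℝ (Fin d)))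
  haveI : VAddInvariantMeasure (Submodule.span ℤ (Set.range ⇑b)) (EuclideanSpace ℝ (Fin d))
      volume :=
    (inferInstance : VAddInvariantMeasure (Submodule.span ℤ (Set.range ⇑b)).toAddSubgroup
      (EuclideanSpace ℝ (Fin d)) volume)
  have step1 : ∫ x in fundDom d, G (x + v)
      = ∫ x in (fun x : EuclideanSpace ℝ (Fin d) => x + v) ⁻¹' fundDom d, G (x + v) := by
    refine hFD.setIntegral_eq hFD' (fun l x => ?_)
    show G ((↑l + x) + v) = G (x + v)
    rw [add_assoc]
    exact periodic_lattice hG l _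
  rw [step1]
  exact hmp.setIntegral_preimage_emb (Homeomorph.addRight v).measurableEmbedding _ _

lemma hasDerivAt_slice {H : ℝ × EuclideanSpace ℝ (Fin d) → ℝ} (hH : ContDiff ℝ (⊤:ℕ∞) H)
    (s : ℝ) (x : EuclideanSpace ℝ (Fin d)) :
    HasDerivAt (fun s => H (s, x)) (fderiv ℝ H (s, x) (1, 0)) s := by
  have h1 : HasDerivAt (fun s : ℝ => (s, x)) ((1:ℝ), (0:EuclideanSpace ℝ (Fin d))) s :=
    (hasDerivAt_id s).prodMk (hasDerivAt_const s x)
  exact (hH.diffb (s, x)).hasFDerivAt.comp_hasDerivAt s h1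

lemma hasDerivAt_param (H : ℝ × EuclideanSpace ℝ (Fin d) → ℝ) (hH : ContDiff ℝ (⊤:ℕ∞) H)
    (t₀ : ℝ) (D : EuclideanSpace ℝ (Fin d) → ℝ)
    (hD : ∀ x, HasDerivAt (fun s => H (s, x)) (D x) t₀) :
    HasDerivAt (fun s => ∫ x in fundDom d, H (s, x)) (∫ x in fundDom d, D x) t₀ := by
  have hDeq : D = fun x => fderiv ℝ H (t₀, x) (1, 0) :=
    funext fun x => (hD x).unique (hasDerivAt_slice hH t₀ x)
  have hDc : Continuous (fun p : ℝ × EuclideanSpace ℝ (Fin d) => fderiv ℝ H p (1, 0)) :=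
    (hH.fderiv_smooth.continuous).clm_apply continuous_const
  have hK : IsCompact ((Metric.closedBall t₀ 1) ×ˢ
      (Metric.closedBall (0 : EuclideanSpace ℝ (Fin d)) (Real.sqrt d))) :=
    (isCompact_closedBall _ _).prod (isCompact_closedBall _ _)
  obtain ⟨C, hC⟩ := hK.exists_bound_of_continuousOn
    (hDc.norm.continuousOn)
  rw [hDeq]
  refine (hasDerivAt_integral_of_dominated_loc_of_deriv_le (F := fun s x => H (s, x))
    (F' := fun s x => fderiv ℝ H (s, x) (1, 0)) (bound := fun _ => C)
    (Metric.ball_mem_nhds t₀ one_pos) ?_ ?_ ?_ ?_ ?_ ?_).2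
  · exact Filter.Eventually.of_forall fun s =>
      ((hH.continuous.comp (continuous_const.prodMk continuous_id)).aestronglyMeasurable)
  · exact integrableOn_fundDom _ (hH.continuous.comp (continuous_const.prodMk continuous_id))
  · exact ((hDc.comp (continuous_const.prodMk continuous_id)).aestronglyMeasurable)
  · refine (ae_restrict_iff' measurableSet_fundDom).2 (Filter.Eventually.of_forall
      fun x hx => fun s hs => ?_)
    have h9 := hC (s, x) ⟨Metric.ball_subset_closedBall hs, fundDom_subset hx⟩
    rw [norm_norm] at h9
    exact h9
  · exact integrableOn_const volume_fundDom_lt.ne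
  · exact Filter.Eventually.of_forall fun x => fun s _ => hasDerivAt_slice hH s x

lemma integral_pder_eq_zero {G : EuclideanSpace ℝ (Fin d) → ℝ}
    (hGs : ContDiff ℝ (⊤:ℕ∞) G) (hGp : ZPeriodic G) (i : Fin d) :
    ∫ x in fundDom d, pder i G x = 0 := by
  set e : EuclideanSpace ℝ (Fin d) := EuclideanSpace.single i 1 with he
  have hH : ContDiff ℝ (⊤:ℕ∞) (fun p : ℝ × EuclideanSpace ℝ (Fin d) => G (p.2 + p.1 • e)) :=
    hGs.comp (contDiff_snd.add (contDiff_fst.smul contDiff_const))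
  have hD : ∀ x, HasDerivAt (fun c : ℝ => G (x + c • e)) (pder i G x) 0 := by
    intro x
    have h1 : HasDerivAt (fun c : ℝ => x + c • e) e 0 := by
      simpa using ((hasDerivAt_id (0:ℝ)).smul_const e).const_add x
    have h2 := (hGs.diffb (x + (0:ℝ) • e)).hasFDerivAt.comp_hasDerivAt 0 h1
    simpa [pder, Function.comp_def] using h2
  have key := hasDerivAt_param _ hH 0 (fun x => pder i G x) hD
  have hconst : (fun c : ℝ => ∫ x in fundDom d, G (x + c • e))
      = fun _ => ∫ x in fundDom d, G x :=
    funext fun c => setIntegral_translate hGp (c • e)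
  rw [hconst] at key
  exact key.unique (hasDerivAt_const _ _)

lemma ibp {f g : EuclideanSpace ℝ (Fin d) → ℝ}
    (hfs : ContDiff ℝ (⊤:ℕ∞) f) (hgs : ContDiff ℝ (⊤:ℕ∞) g)
    (hfp : ZPeriodic f) (hgp : ZPeriodic g) (i : Fin d) :
    ∫ x in fundDom d, f x * pder i g x = -∫ x in fundDom d, pder i f x * g x := by
  have hmulp : ZPeriodic (fun y => f y * g y) := by
    intro x k
    show f _ * g _ = f x * g x
    rw [hfp x k, hgp x k]
  have h0 := integral_pder_eq_zero (hfs.mul hgs) hmulp i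
  have hpt : (fun x => pder i (fun y => f y * g y) x)
      = fun x => pder i f x * g x + f x * pder i g x :=
    funext fun x => pder_mul i (hfs.diffb x) (hgs.diffb x)
  rw [hpt] at h0
  rw [integral_add (integrableOn_fundDom _ (((contDiff_pder hfs i).continuous).fun_mul hgs.continuous))
    (integrableOn_fundDom _ (hfs.continuous.fun_mul ((contDiff_pder hgs i).continuous)))] at h0
  linarith

lemma sm_rpow_comp {X : Type*} [NormedAddCommGroup X] [NormedSpace ℝ X] {f : X → ℝ}
    (hf : ContDiff ℝ (⊤:ℕ∞) f) (hpos : ∀ x, 0 < f x) (c : ℝ) :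
    ContDiff ℝ (⊤:ℕ∞) (fun x => f x ^ c) := by
  rw [contDiff_iff_contDiffAt]
  intro x
  exact (Real.contDiffAt_rpow_const_of_ne (ne_of_gt (hpos x))).comp x hf.contDiffAt


section core
variable {g : EuclideanSpace ℝ (Fin d) → ℝ} {m : ℝ}
variable (hgs : ContDiff ℝ (⊤:ℕ∞) g) (hgp : ZPeriodic g) (hgpos : ∀ x, 0 < g x)

section
include hgs

lemma sm_w (c : ℝ) (hgpos : ∀ x, 0 < g x) : ContDiff ℝ (⊤:ℕ∞) (fun x => g x ^ c) := by
  rw [contDiff_iff_contDiffAt]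
  intro x
  exact (Real.contDiffAt_rpow_const_of_ne (ne_of_gt (hgpos x))).comp x hgs.contDiffAt

lemma sm_p (i : Fin d) : ContDiff ℝ (⊤:ℕ∞) (pder i g) := contDiff_pder hgs i

lemma sm_q (i j : Fin d) : ContDiff ℝ (⊤:ℕ∞) (pder i (pder j g)) :=
  contDiff_pder (contDiff_pder hgs j) i

lemma sm_lap : ContDiff ℝ (⊤:ℕ∞) (lap g) := by
  have : lap g = fun x => ∑ i, pder i (pder i g) x := rfl
  rw [this]
  exact ContDiff.sum fun i _ => sm_q hgs i i

lemma sm_gradSq : ContDiff ℝ (⊤:ℕ∞) (gradSq g) := by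
  have : gradSq g = fun x => ∑ i, (pder i g x)^2 := rfl
  rw [this]
  exact ContDiff.sum fun i _ => (sm_p hgs i).pow 2

lemma sm_hessSq : ContDiff ℝ (⊤:ℕ∞) (hessSq g) := by
  have : hessSq g = fun x => ∑ i, ∑ j, (pder i (pder j g) x)^2 := rfl
  rw [this]
  exact ContDiff.sum fun i _ => ContDiff.sum fun j _ => (sm_q hgs i j).pow 2

end

section
include hgp

lemma per_w (c : ℝ) : ZPeriodic (fun x => g x ^ c) := by
  intro x k; show g _ ^ c = g x ^ c; rw [hgp x k]

include hgs

lemma per_p (i : Fin d) : ZPeriodic (pder i g) := hgp.pder_per hgs i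
-- call as: per_p hgs hgp

lemma per_q (i j : Fin d) : ZPeriodic (pder i (pder j g)) :=
  (hgp.pder_per hgs j).pder_per (contDiff_pder hgs j) i

lemma per_lap : ZPeriodic (lap g) := by
  intro x k
  show ∑ i, pder i (pder i g) _ = ∑ i, pder i (pder i g) x
  exact Finset.sum_congr rfl fun i _ => per_q hgs hgp i i x k

lemma per_gradSq : ZPeriodic (gradSq g) := by
  intro x k
  show ∑ i, (pder i g _)^2 = ∑ i, (pder i g x)^2
  exact Finset.sum_congr rfl fun i _ => by rw [per_p hgs hgp i x k]

end

section
include hgs hgpos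

lemma pder_w_mul (c : ℝ) (u : EuclideanSpace ℝ (Fin d) → ℝ) (hu : ContDiff ℝ (⊤:ℕ∞) u)
    (j : Fin d) (x : EuclideanSpace ℝ (Fin d)) :
    pder j (fun y => g y ^ c * u y) x
      = c * g x ^ (c-1) * pder j g x * u x + g x ^ c * pder j u x := by
  rw [pder_mul j ((sm_w hgs c hgpos).diffb x) (hu.diffb x), pder_rpow j (hgs.diffb x) (hgpos x) c]

include hgp

/-- E1 per-pair identity. -/
lemma E1_pair (i j : Fin d) :
    ∫ x in fundDom d, g x ^ m * pder i g x * pder i (pder j (pder j g)) x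
      = -(m * (∫ x in fundDom d, g x ^ (m-1) * pder i g x * pder j g x * pder i (pder j g) x)
          + ∫ x in fundDom d, g x ^ m * (pder i (pder j g) x)^2) := by
  have hcomm : ∀ x, pder i (pder j (pder j g)) x = pder j (pder i (pder j g)) x :=
    fun x => pder_comm (contDiff_pder hgs j) i j x
  have hfs : ContDiff ℝ (⊤:ℕ∞) (fun y => g y ^ m * pder i g y) :=
    (sm_w hgs m hgpos).mul (sm_p hgs i)
  have hfp : ZPeriodic (fun y => g y ^ m * pder i g y) := by
    intro x k; show g _ ^ m * pder i g _ = _; rw [hgp x k, per_p hgs hgp i x k]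
  have key := ibp hfs (sm_q hgs i j) hfp (per_q hgs hgp i j) j
  have lhs_eq : (∫ x in fundDom d, g x ^ m * pder i g x * pder i (pder j (pder j g)) x)
      = ∫ x in fundDom d, (fun y => g y ^ m * pder i g y) x * pder j (pder i (pder j g)) x := by
    refine setIntegral_congr_fun measurableSet_fundDom (fun x _ => ?_)
    rw [hcomm x]
  have rhs_pt : ∀ x, pder j (fun y => g y ^ m * pder i g y) x * pder i (pder j g) x
      = m * (g x ^ (m-1) * pder i g x * pder j g x * pder i (pder j g) x)
        + g x ^ m * (pder i (pder j g) x)^2 := by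
    intro x
    rw [pder_w_mul hgs hgpos m (pder i g) (sm_p hgs i) j x]
    have : pder j (pder i g) x = pder i (pder j g) x := pder_comm hgs j i x
    rw [this]
    ring
  have rhs_eq : (∫ x in fundDom d, pder j (fun y => g y ^ m * pder i g y) x * pder i (pder j g) x)
      = m * (∫ x in fundDom d, g x ^ (m-1) * pder i g x * pder j g x * pder i (pder j g) x)
        + ∫ x in fundDom d, g x ^ m * (pder i (pder j g) x)^2 := by
    rw [setIntegral_congr_fun measurableSet_fundDom (fun x _ => rhs_pt x)]
    rw [integral_add, integral_const_mul]
    · exact (integrableOn_fundDom _ (by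
        exact continuous_const.mul ((((sm_w hgs (m-1) hgpos).continuous.mul
          (sm_p hgs i).continuous).mul (sm_p hgs j).continuous).mul (sm_q hgs i j).continuous)))
    · exact integrableOn_fundDom _ ((sm_w hgs m hgpos).continuous.mul
        ((sm_q hgs i j).continuous.pow 2))
  rw [lhs_eq, key, rhs_eq]

omit hgs hgp hgpos in
lemma pder_sq (u : EuclideanSpace ℝ (Fin d) → ℝ) (hu : ContDiff ℝ (⊤:ℕ∞) u) (j : Fin d)
    (x : EuclideanSpace ℝ (Fin d)) :
    pder j (fun y => (u y)^2) x = 2 * u x * pder j u x := by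
  have e1 : (fun y => (u y)^2) = fun y => u y * u y := funext fun y => sq (u y) ▸ (sq (u y)).symm ▸ rfl
  rw [show (fun y => (u y)^2) = fun y => u y * u y from funext fun y => by ring]
  rw [pder_mul j (hu.diffb x) (hu.diffb x)]
  ring

/-- E2 per-pair identity. -/
lemma E2_pair (i j : Fin d) :
    ∫ x in fundDom d, g x ^ m * pder i g x * pder i (pder j (pder j g)) x
      = -(m * (∫ x in fundDom d, g x ^ (m-1) * (pder i g x)^2 * pder j (pder j g) x)
          + ∫ x in fundDom d, g x ^ m * (pder i (pder i g) x * pder j (pder j g) x)) := by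
  have hfs : ContDiff ℝ (⊤:ℕ∞) (fun y => g y ^ m * pder i g y) :=
    (sm_w hgs m hgpos).mul (sm_p hgs i)
  have hfp : ZPeriodic (fun y => g y ^ m * pder i g y) := by
    intro x k; show g _ ^ m * pder i g _ = _; rw [hgp x k, per_p hgs hgp i x k]
  have key := ibp hfs (sm_q hgs j j) hfp (per_q hgs hgp j j) i
  have lhs_eq : (∫ x in fundDom d, g x ^ m * pder i g x * pder i (pder j (pder j g)) x)
      = ∫ x in fundDom d, (fun y => g y ^ m * pder i g y) x * pder i (pder j (pder j g)) x := rfl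
  have rhs_pt : ∀ x, pder i (fun y => g y ^ m * pder i g y) x * pder j (pder j g) x
      = m * (g x ^ (m-1) * (pder i g x)^2 * pder j (pder j g) x)
        + g x ^ m * (pder i (pder i g) x * pder j (pder j g) x) := by
    intro x
    rw [pder_w_mul hgs hgpos m (pder i g) (sm_p hgs i) i x]
    ring
  have rhs_eq : (∫ x in fundDom d, pder i (fun y => g y ^ m * pder i g y) x * pder j (pder j g) x)
      = m * (∫ x in fundDom d, g x ^ (m-1) * (pder i g x)^2 * pder j (pder j g) x)
        + ∫ x in fundDom d, g x ^ m * (pder i (pder i g) x * pder j (pder j g) x) := by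
    rw [setIntegral_congr_fun measurableSet_fundDom (fun x _ => rhs_pt x)]
    rw [integral_add, integral_const_mul]
    · exact integrableOn_fundDom _ (continuous_const.mul (((sm_w hgs (m-1) hgpos).continuous.mul
        ((sm_p hgs i).continuous.pow 2)).mul (sm_q hgs j j).continuous))
    · exact integrableOn_fundDom _ ((sm_w hgs m hgpos).continuous.mul
        ((sm_q hgs i i).continuous.mul (sm_q hgs j j).continuous))
  rw [lhs_eq, key, rhs_eq]

/-- E3 per-index identity. -/
lemma E3_j (j : Fin d) :
    ∫ x in fundDom d, g x ^ (m-1) * gradSq g x * pder j (pder j g) x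
      = -((m-1) * (∫ x in fundDom d, g x ^ (m-2) * gradSq g x * (pder j g x)^2)
          + 2 * ∑ i, ∫ x in fundDom d,
              g x ^ (m-1) * (pder i g x * pder j g x * pder i (pder j g) x)) := by
  have hfs : ContDiff ℝ (⊤:ℕ∞) (fun y => g y ^ (m-1) * gradSq g y) :=
    (sm_w hgs (m-1) hgpos).mul (sm_gradSq hgs)
  have hfp : ZPeriodic (fun y => g y ^ (m-1) * gradSq g y) := by
    intro x k; show g _ ^ (m-1) * gradSq g _ = _
    rw [hgp x k, per_gradSq hgs hgp x k]
  have key := ibp hfs (sm_p hgs j) hfp (per_p hgs hgp j) j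
  have lhs_eq : (∫ x in fundDom d, g x ^ (m-1) * gradSq g x * pder j (pder j g) x)
      = ∫ x in fundDom d, (fun y => g y ^ (m-1) * gradSq g y) x * pder j (pder j g) x := rfl
  have hgr : ∀ x, pder j (gradSq g) x = ∑ i, 2 * pder i g x * pder j (pder i g) x := by
    intro x
    have e0 : gradSq g = fun y => ∑ i, (pder i g y)^2 := rfl
    rw [e0, pder_sum Finset.univ (fun i y => (pder i g y)^2) j
      (fun i => ((sm_p hgs i).pow 2).diffb x)]
    exact Finset.sum_congr rfl fun i _ => pder_sq (pder i g) (sm_p hgs i) j x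
  have rhs_pt : ∀ x, pder j (fun y => g y ^ (m-1) * gradSq g y) x * pder j g x
      = (m-1) * (g x ^ (m-2) * gradSq g x * (pder j g x)^2)
        + ∑ i, 2 * (g x ^ (m-1) * (pder i g x * pder j g x * pder i (pder j g) x)) := by
    intro x
    rw [pder_w_mul hgs hgpos (m-1) (gradSq g) (sm_gradSq hgs) j x]
    rw [hgr x]
    have : (m-1) - 1 = m - 2 := by ring
    rw [this]
    rw [add_mul, Finset.mul_sum, Finset.sum_mul]
    congr 1
    · ring
    · refine Finset.sum_congr rfl fun i _ => ?_
      rw [pder_comm hgs j i x]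
      ring
  have rhs_eq : (∫ x in fundDom d, pder j (fun y => g y ^ (m-1) * gradSq g y) x * pder j g x)
      = (m-1) * (∫ x in fundDom d, g x ^ (m-2) * gradSq g x * (pder j g x)^2)
        + 2 * ∑ i, ∫ x in fundDom d,
            g x ^ (m-1) * (pder i g x * pder j g x * pder i (pder j g) x) := by
    rw [setIntegral_congr_fun measurableSet_fundDom (fun x _ => rhs_pt x)]
    rw [integral_add, integral_const_mul, integral_finset_sum]
    · rw [Finset.mul_sum]
      congr 1
      refine Finset.sum_congr rfl fun i _ => integral_const_mul 2 _
    · intro i _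
      exact integrableOn_fundDom _ (continuous_const.mul ((sm_w hgs (m-1) hgpos).continuous.mul
        (((sm_p hgs i).continuous.mul (sm_p hgs j).continuous).mul (sm_q hgs i j).continuous)))
    · exact integrableOn_fundDom _ (continuous_const.mul (((sm_w hgs (m-2) hgpos).continuous.mul
        (sm_gradSq hgs).continuous).mul ((sm_p hgs j).continuous.pow 2)))
    · refine integrableOn_fundDom _ (continuous_finset_sum _ fun i _ => ?_)
      exact continuous_const.mul ((sm_w hgs (m-1) hgpos).continuous.mul
        (((sm_p hgs i).continuous.mul (sm_p hgs j).continuous).mul (sm_q hgs i j).continuous))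
  rw [lhs_eq, key, rhs_eq]

omit hgs hgp hgpos in
lemma int_sum (F : Fin d → EuclideanSpace ℝ (Fin d) → ℝ) (hF : ∀ i, Continuous (F i)) :
    ∫ x in fundDom d, ∑ i, F i x = ∑ i, ∫ x in fundDom d, F i x :=
  integral_finset_sum _ (fun i _ => integrableOn_fundDom _ (hF i))

omit hgs hgp hgpos in
lemma int_double_sum (F : Fin d → Fin d → EuclideanSpace ℝ (Fin d) → ℝ)
    (hF : ∀ i j, Continuous (F i j)) :
    ∫ x in fundDom d, ∑ i, ∑ j, F i j x = ∑ i, ∑ j, ∫ x in fundDom d, F i j x := by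
  rw [int_sum (fun i x => ∑ j, F i j x) (fun i => continuous_finset_sum _ fun j _ => hF i j)]
  exact Finset.sum_congr rfl fun i _ => int_sum (F i) (hF i)

omit hgs hgp hgpos in
lemma sq_le_of_quad (a b c : ℝ) (h : ∀ lam : ℝ, 0 ≤ a*lam^2 + 2*b*lam + c) : b^2 ≤ a*c := by
  have h' : ∀ lam : ℝ, 0 ≤ a*(lam*lam) + (2*b)*lam + c := by
    intro lam; have := h lam; nlinarith
  have hd := discrim_le_zero (a := a) (b := 2*b) (c := c) h'
  rw [discrim] at hd
  nlinarith

omit hgs hgp hgpos in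
lemma quad_integral (P Q R : EuclideanSpace ℝ (Fin d) → ℝ) (hP : Continuous P)
    (hQ : Continuous Q) (hR : Continuous R)
    (hsq : ∀ lam : ℝ, ∀ x, 0 ≤ lam^2 * P x + 2*lam * Q x + R x) :
    (∫ x in fundDom d, Q x)^2
      ≤ (∫ x in fundDom d, P x) * (∫ x in fundDom d, R x) := by
  refine sq_le_of_quad _ _ _ (fun lam => ?_)
  have h0 : 0 ≤ ∫ x in fundDom d, (lam^2 * P x + 2*lam * Q x + R x) :=
    setIntegral_nonneg measurableSet_fundDom (fun x _ => hsq lam x)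
  have hint1 : IntegrableOn (fun x => lam^2 * P x + 2*lam * Q x) (fundDom d) :=
    ((integrableOn_fundDom _ hP).const_mul _).add ((integrableOn_fundDom _ hQ).const_mul _)
  have hint2 : IntegrableOn (fun x => lam^2 * P x) (fundDom d) :=
    (integrableOn_fundDom _ hP).const_mul _
  have hint3 : IntegrableOn (fun x => 2*lam * Q x) (fundDom d) :=
    (integrableOn_fundDom _ hQ).const_mul _
  rw [integral_add hint1 (integrableOn_fundDom _ hR), integral_add hint2 hint3,
    integral_const_mul, integral_const_mul] at h0
  nlinarith [h0]

include hgpos in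
omit hgs hgp in
lemma rpow_halves (x : EuclideanSpace ℝ (Fin d)) :
    g x ^ ((m-2)/2) * g x ^ ((m-2)/2) = g x ^ (m-2)
    ∧ g x ^ ((m-2)/2) * g x ^ (m/2) = g x ^ (m-1)
    ∧ g x ^ (m/2) * g x ^ (m/2) = g x ^ m := by
  refine ⟨?_, ?_, ?_⟩ <;> rw [← Real.rpow_add (hgpos x)] <;> (congr 1; ring)

/-- Cauchy–Schwarz: β² ≤ γ·α. -/
lemma CS1 :
    (∫ x in fundDom d, g x ^ (m-1)
        * ∑ i, ∑ j, pder i g x * pder j g x * pder i (pder j g) x)^2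
      ≤ (∫ x in fundDom d, g x ^ (m-2) * (gradSq g x)^2)
        * (∫ x in fundDom d, g x ^ m * hessSq g x) := by
  refine quad_integral _ _ _ ?_ ?_ ?_ ?_
  · exact (sm_w hgs (m-2) hgpos).continuous.mul ((sm_gradSq hgs).continuous.pow 2)
  · exact (sm_w hgs (m-1) hgpos).continuous.mul (continuous_finset_sum _ fun i _ =>
      continuous_finset_sum _ fun j _ =>
        ((sm_p hgs i).continuous.mul (sm_p hgs j).continuous).mul (sm_q hgs i j).continuous)
  · exact (sm_w hgs m hgpos).continuous.mul (sm_hessSq hgs).continuous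
  · intro lam x
    obtain ⟨w1, w2, w3⟩ := rpow_halves hgpos (m := m) x
    have key : lam^2 * (g x ^ (m-2) * (gradSq g x)^2)
        + 2*lam * (g x ^ (m-1) * ∑ i, ∑ j, pder i g x * pder j g x * pder i (pder j g) x)
        + g x ^ m * hessSq g x
        = ∑ i, ∑ j, (lam * (g x ^ ((m-2)/2) * (pder i g x * pder j g x))
            + g x ^ (m/2) * pder i (pder j g) x)^2 := by
      rw [show hessSq g x = ∑ i, ∑ j, (pder i (pder j g) x)^2 from rfl,
        show gradSq g x = ∑ i, (pder i g x)^2 from rfl]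
      rw [← w1, ← w2, ← w3, pow_two (∑ i, (pder i g x)^2),
        Fintype.sum_mul_sum (fun i : Fin d => (pder i g x)^2)
          (fun j : Fin d => (pder j g x)^2)]
      simp only [Finset.mul_sum]
      rw [← Finset.sum_add_distrib, ← Finset.sum_add_distrib]
      refine Finset.sum_congr rfl fun i _ => ?_
      rw [← Finset.sum_add_distrib, ← Finset.sum_add_distrib]
      refine Finset.sum_congr rfl fun j _ => ?_
      ring
    rw [key]
    exact Finset.sum_nonneg fun i _ => Finset.sum_nonneg fun j _ => sq_nonneg _

/-- Cauchy–Schwarz: I² ≤ γ·A. -/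
lemma CS2 :
    (∫ x in fundDom d, g x ^ (m-1) * gradSq g x * lap g x)^2
      ≤ (∫ x in fundDom d, g x ^ (m-2) * (gradSq g x)^2)
        * (∫ x in fundDom d, g x ^ m * (lap g x)^2) := by
  have hc : Continuous (fun x => g x ^ (m-1) * gradSq g x * lap g x) :=
    ((sm_w hgs (m-1) hgpos).continuous.mul (sm_gradSq hgs).continuous).mul (sm_lap hgs).continuous
  refine quad_integral _ _ _ ?_ hc ?_ ?_
  · exact (sm_w hgs (m-2) hgpos).continuous.mul ((sm_gradSq hgs).continuous.pow 2)
  · exact (sm_w hgs m hgpos).continuous.mul ((sm_lap hgs).continuous.pow 2)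
  · intro lam x
    obtain ⟨w1, w2, w3⟩ := rpow_halves hgpos (m := m) x
    have key : lam^2 * (g x ^ (m-2) * (gradSq g x)^2)
        + 2*lam * (g x ^ (m-1) * gradSq g x * lap g x)
        + g x ^ m * (lap g x)^2
        = (lam * (g x ^ ((m-2)/2) * gradSq g x) + g x ^ (m/2) * lap g x)^2 := by
      rw [← w1, ← w2, ← w3]
      ring
    rw [key]
    exact sq_nonneg _

lemma conv_alpha :
    (∑ i, ∑ j, ∫ x in fundDom d, g x ^ m * (pder i (pder j g) x)^2)
      = ∫ x in fundDom d, g x ^ m * hessSq g x := by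
  rw [← int_double_sum _ (fun i j => (sm_w hgs m hgpos).continuous.fun_mul
    ((sm_q hgs i j).continuous.fun_pow 2))]
  refine setIntegral_congr_fun measurableSet_fundDom (fun x _ => ?_)
  rw [show hessSq g x = ∑ i, ∑ j, (pder i (pder j g) x)^2 from rfl]
  simp only [Finset.mul_sum]

lemma conv_beta :
    (∫ x in fundDom d, g x ^ (m-1) * ∑ i, ∑ j, pder i g x * pder j g x * pder i (pder j g) x)
      = ∑ i, ∑ j, ∫ x in fundDom d,
          g x ^ (m-1) * pder i g x * pder j g x * pder i (pder j g) x := by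
  rw [← int_double_sum _ (fun i j => (((sm_w hgs (m-1) hgpos).continuous.fun_mul
    (sm_p hgs i).continuous).fun_mul (sm_p hgs j).continuous).fun_mul (sm_q hgs i j).continuous)]
  refine setIntegral_congr_fun measurableSet_fundDom (fun x _ => ?_)
  simp only [Finset.mul_sum]
  refine Finset.sum_congr rfl fun i _ => Finset.sum_congr rfl fun j _ => by ring

lemma conv_I2 :
    (∑ i, ∑ j, ∫ x in fundDom d, g x ^ (m-1) * (pder i g x)^2 * pder j (pder j g) x)
      = ∫ x in fundDom d, g x ^ (m-1) * gradSq g x * lap g x := by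
  rw [← int_double_sum _ (fun i j => ((sm_w hgs (m-1) hgpos).continuous.fun_mul
    ((sm_p hgs i).continuous.fun_pow 2)).fun_mul (sm_q hgs j j).continuous)]
  refine setIntegral_congr_fun measurableSet_fundDom (fun x _ => ?_)
  rw [show gradSq g x = ∑ i, (pder i g x)^2 from rfl,
    show lap g x = ∑ j, pder j (pder j g) x from rfl]
  rw [mul_assoc, Fintype.sum_mul_sum (fun i : Fin d => (pder i g x)^2)
    (fun j : Fin d => pder j (pder j g) x)]
  simp only [Finset.mul_sum]
  refine Finset.sum_congr rfl fun i _ => Finset.sum_congr rfl fun j _ => by ring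

lemma conv_A2 :
    (∑ i, ∑ j, ∫ x in fundDom d, g x ^ m * (pder i (pder i g) x * pder j (pder j g) x))
      = ∫ x in fundDom d, g x ^ m * (lap g x)^2 := by
  rw [← int_double_sum _ (fun i j => (sm_w hgs m hgpos).continuous.fun_mul
    ((sm_q hgs i i).continuous.fun_mul (sm_q hgs j j).continuous))]
  refine setIntegral_congr_fun measurableSet_fundDom (fun x _ => ?_)
  rw [show lap g x = ∑ j, pder j (pder j g) x from rfl, pow_two,
    Fintype.sum_mul_sum (fun i : Fin d => pder i (pder i g) x)
      (fun j : Fin d => pder j (pder j g) x)]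
  simp only [Finset.mul_sum]

lemma conv_gamma :
    (∑ j, ∫ x in fundDom d, g x ^ (m-2) * gradSq g x * (pder j g x)^2)
      = ∫ x in fundDom d, g x ^ (m-2) * (gradSq g x)^2 := by
  rw [← int_sum _ (fun j => ((sm_w hgs (m-2) hgpos).continuous.fun_mul
    (sm_gradSq hgs).continuous).fun_mul ((sm_p hgs j).continuous.fun_pow 2))]
  refine setIntegral_congr_fun measurableSet_fundDom (fun x _ => ?_)
  rw [show (gradSq g x)^2 = gradSq g x * gradSq g x from pow_two _]
  nth_rewrite 3 [show gradSq g x = ∑ j, (pder j g x)^2 from rfl]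
  rw [Finset.mul_sum, Finset.mul_sum]
  refine Finset.sum_congr rfl fun j _ => by ring

lemma conv_Ilhs :
    (∑ j, ∫ x in fundDom d, g x ^ (m-1) * gradSq g x * pder j (pder j g) x)
      = ∫ x in fundDom d, g x ^ (m-1) * gradSq g x * lap g x := by
  rw [← int_sum _ (fun j => ((sm_w hgs (m-1) hgpos).continuous.fun_mul
    (sm_gradSq hgs).continuous).fun_mul ((sm_q hgs j j).continuous))]
  refine setIntegral_congr_fun measurableSet_fundDom (fun x _ => ?_)
  rw [show lap g x = ∑ j, pder j (pder j g) x from rfl, Finset.mul_sum]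

lemma Dv_split :
    (∑ i, ∫ x in fundDom d, g x ^ m * pder i g x * pder i (lap g) x)
      = ∑ i, ∑ j, ∫ x in fundDom d, g x ^ m * pder i g x * pder i (pder j (pder j g)) x := by
  refine Finset.sum_congr rfl fun i _ => ?_
  have pt : ∀ x, g x ^ m * pder i g x * pder i (lap g) x
      = ∑ j, g x ^ m * pder i g x * pder i (pder j (pder j g)) x := by
    intro x
    rw [show lap g = fun y => ∑ j, pder j (pder j g) y from rfl,
      pder_sum Finset.univ (fun j y => pder j (pder j g) y) i (fun j => (sm_q hgs j j).diffb x),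
      Finset.mul_sum]
  rw [setIntegral_congr_fun measurableSet_fundDom (fun x _ => pt x),
    int_sum _ (fun j => ((sm_w hgs m hgpos).continuous.fun_mul (sm_p hgs i).continuous).fun_mul
      (contDiff_pder (sm_q hgs j j) i).continuous)]

lemma E1_total :
    (∑ i, ∫ x in fundDom d, g x ^ m * pder i g x * pder i (lap g) x)
      = -(m * (∑ i, ∑ j, ∫ x in fundDom d,
            g x ^ (m-1) * pder i g x * pder j g x * pder i (pder j g) x)
          + ∫ x in fundDom d, g x ^ m * hessSq g x) := by
  rw [Dv_split hgs hgp hgpos, ← conv_alpha hgs hgp hgpos]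
  rw [Finset.sum_congr rfl (fun i _ => Finset.sum_congr rfl
    (fun j _ => E1_pair hgs hgp hgpos i j))]
  simp only [neg_add_rev, Finset.sum_add_distrib, Finset.sum_neg_distrib, ← Finset.mul_sum]

lemma E2_total :
    (∑ i, ∫ x in fundDom d, g x ^ m * pder i g x * pder i (lap g) x)
      = -(m * (∫ x in fundDom d, g x ^ (m-1) * gradSq g x * lap g x)
          + ∫ x in fundDom d, g x ^ m * (lap g x)^2) := by
  rw [Dv_split hgs hgp hgpos, ← conv_I2 hgs hgp hgpos, ← conv_A2 hgs hgp hgpos]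
  rw [Finset.sum_congr rfl (fun i _ => Finset.sum_congr rfl
    (fun j _ => E2_pair hgs hgp hgpos i j))]
  simp only [neg_add_rev, Finset.sum_add_distrib, Finset.sum_neg_distrib, ← Finset.mul_sum]

lemma E3_total :
    (∫ x in fundDom d, g x ^ (m-1) * gradSq g x * lap g x)
      = -((m-1) * (∫ x in fundDom d, g x ^ (m-2) * (gradSq g x)^2)
          + 2 * (∑ i, ∑ j, ∫ x in fundDom d,
              g x ^ (m-1) * pder i g x * pder j g x * pder i (pder j g) x)) := by
  rw [← conv_Ilhs hgs hgp hgpos, ← conv_gamma hgs hgp hgpos]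
  rw [Finset.sum_congr rfl (fun j _ => E3_j hgs hgp hgpos j)]
  simp only [neg_add_rev, Finset.sum_add_distrib, Finset.sum_neg_distrib, ← Finset.mul_sum]
  have pt : ∀ j : Fin d, (∑ i, ∫ x in fundDom d,
        g x ^ (m-1) * (pder i g x * pder j g x * pder i (pder j g) x))
      = ∑ i, ∫ x in fundDom d, g x ^ (m-1) * pder i g x * pder j g x * pder i (pder j g) x := by
    intro j
    refine Finset.sum_congr rfl fun i _ => ?_
    refine setIntegral_congr_fun measurableSet_fundDom (fun x _ => by ring)
  rw [Finset.sum_congr rfl (fun j _ => pt j), Finset.sum_comm]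

lemma gamma_nonneg : 0 ≤ ∫ x in fundDom d, g x ^ (m-2) * (gradSq g x)^2 :=
  setIntegral_nonneg measurableSet_fundDom fun x _ =>
    mul_nonneg (le_of_lt (Real.rpow_pos_of_pos (hgpos x) _)) (sq_nonneg _)

lemma alpha_nonneg : 0 ≤ ∫ x in fundDom d, g x ^ m * hessSq g x :=
  setIntegral_nonneg measurableSet_fundDom fun x _ =>
    mul_nonneg (le_of_lt (Real.rpow_pos_of_pos (hgpos x) _))
      (Finset.sum_nonneg fun i _ => Finset.sum_nonneg fun j _ => sq_nonneg _)

lemma A2_nonneg : 0 ≤ ∫ x in fundDom d, g x ^ m * (lap g x)^2 :=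
  setIntegral_nonneg measurableSet_fundDom fun x _ =>
    mul_nonneg (le_of_lt (Real.rpow_pos_of_pos (hgpos x) _)) (sq_nonneg _)

omit hgs hgp hgpos in
lemma core_algebra (mm G al A2 Iv B S : ℝ)
    (hE1 : S = -(mm*B + al)) (hE2 : S = -(mm*Iv + A2)) (hE3 : Iv = -((mm-1)*G + 2*B))
    (hCS1 : B^2 ≤ G*al) (hCS2 : Iv^2 ≤ G*A2) (hG : 0 ≤ G) (hal : 0 ≤ al) (hA2 : 0 ≤ A2) :
    ((-2*mm^2 + mm + 1)/9) * G ≤ -S := by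
  have hEq : mm * B + al = mm * Iv + A2 := by
    have h := hE1.symm.trans hE2
    have := neg_injective h
    linarith
  have hS : -S = mm * B + al := by rw [hE1]; ring
  rw [hS]
  rcases eq_or_lt_of_le hG with hG0 | hGpos
  · have hB2 : B^2 ≤ 0 := by rw [← hG0] at hCS1; linarith
    have hB : B = 0 := by
      have h0 : B^2 = 0 := le_antisymm hB2 (sq_nonneg B)
      exact pow_eq_zero_iff two_ne_zero |>.1 h0
    rw [← hG0, hB]
    simpa using hal
  · have hIv : Iv = (1-mm)*G - 2*B := by linarith [hE3]
    subst hIv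
    have h1 : mm*B*G + B^2 ≤ (mm*B+al)*G := by nlinarith [hCS1]
    have h2 : mm*((1-mm)*G - 2*B)*G + ((1-mm)*G - 2*B)^2
        ≤ (mm*((1-mm)*G - 2*B)+A2)*G := by nlinarith [hCS2]
    have hEqG : (mm*B+al)*G = (mm*((1-mm)*G - 2*B)+A2)*G := by rw [hEq]
    have key : ((-2*mm^2+mm+1)/9)*G*G ≤ (mm*B+al)*G := by
      nlinarith [h1, h2, hEqG, sq_nonneg (3*B-(1-mm)*G)]
    nlinarith [key, hGpos]

/-- The core entropy-dissipation inequality. -/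
lemma core_ineq :
    ((-2*m^2 + m + 1)/9) * (∫ x in fundDom d, g x ^ (m-2) * (gradSq g x)^2)
      ≤ -(∑ i, ∫ x in fundDom d, g x ^ m * pder i g x * pder i (lap g) x) := by
  have hCS1 : (∑ i, ∑ j, ∫ x in fundDom d,
        g x ^ (m-1) * pder i g x * pder j g x * pder i (pder j g) x)^2
      ≤ (∫ x in fundDom d, g x ^ (m-2) * (gradSq g x)^2)
        * (∫ x in fundDom d, g x ^ m * hessSq g x) := by
    rw [← conv_beta hgs hgp hgpos]
    exact CS1 hgs hgp hgpos
  exact core_algebra m _ _ _ _ _ _ (E1_total hgs hgp hgpos) (E2_total hgs hgp hgpos)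
    (E3_total hgs hgp hgpos) hCS1 (CS2 hgs hgp hgpos) (gamma_nonneg hgs hgp hgpos)
    (alpha_nonneg hgs hgp hgpos) (A2_nonneg hgs hgp hgpos)

end
end core


end ThinFilmAux

/-- Decay of `∫ h^{m+1}` for the thin-film equation `∂ₜh + div(h∇Δh) = 0` on `𝕋^d`,
for `−1/2 ≤ m ≤ 1`, `m ≠ 0`, with dissipation constant `C_m = (−2m² + m + 1)/9 ≥ 0`
(Proposition `positivity`). -/
theorem thinfilm_entropy_decay (d : ℕ) (hd : 1 ≤ d) (m : ℝ)
    (hm1 : -(1 / 2 : ℝ) ≤ m) (hm2 : m ≤ 1) (hm0 : m ≠ 0)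
    (T : ℝ) (h : ℝ × EuclideanSpace ℝ (Fin d) → ℝ)
    (hsm : ContDiff ℝ (⊤ : ℕ∞) h)
    (hper : ∀ t, ZPeriodic (fun x => h (t, x)))
    (hpos : ∀ t x, 0 < h (t, x))
    (heq : ∀ t ∈ Set.Icc (0 : ℝ) T, ∀ x,
      deriv (fun s => h (s, x)) t
        + (∑ i, pder i (fun y =>
            h (t, y) * pder i (lap (fun z => h (t, z))) y) x) = 0) :
    0 ≤ (-2 * m ^ 2 + m + 1) / 9
    ∧ ∀ t ∈ Set.Icc (0 : ℝ) T,
      (1 / (m * (m + 1))) *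
          deriv (fun s => ∫ x in fundDom d, h (s, x) ^ (m + 1)) t
        + ((-2 * m ^ 2 + m + 1) / 9) *
          (∫ x in fundDom d, h (t, x) ^ (m - 2) * (gradSq (fun z => h (t, z)) x) ^ 2)
        ≤ 0 := by
  constructor
  · nlinarith [hm1, hm2]
  intro t ht
  set g : EuclideanSpace ℝ (Fin d) → ℝ := fun x => h (t, x) with hgdef
  have hgs : ContDiff ℝ (⊤:ℕ∞) g := hsm.comp (contDiff_const.prodMk contDiff_id)
  have hgp : ZPeriodic g := hper t
  have hgpos : ∀ x, 0 < g x := fun x => hpos t x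
  have hm1' : (0:ℝ) < m + 1 := by linarith
  have hmm : m * (m + 1) ≠ 0 := by
    intro hcon
    rcases mul_eq_zero.1 hcon with h1 | h2
    · exact hm0 h1
    · linarith
  -- Derivative of the entropy
  have hD : ∀ x, HasDerivAt (fun s => h (s, x) ^ (m+1))
      ((m+1) * g x ^ m * deriv (fun s => h (s, x)) t) t := by
    intro x
    have hdiff : DifferentiableAt ℝ (fun s => h (s, x)) t :=
      (hasDerivAt_slice hsm t x).differentiableAt
    have h0 : HasDerivAt (fun s => h (s, x)) (deriv (fun s => h (s, x)) t) t :=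
      hdiff.hasDerivAt
    have h1 := h0.rpow_const (p := m + 1) (Or.inl (hpos t x).ne')
    have : deriv (fun s => h (s, x)) t * (m+1) * h (t, x) ^ (m + 1 - 1)
        = (m+1) * g x ^ m * deriv (fun s => h (s, x)) t := by
      rw [add_sub_cancel_right]
      ring
    rw [this] at h1
    exact h1
  have hHsm : ContDiff ℝ (⊤:ℕ∞) (fun p : ℝ × EuclideanSpace ℝ (Fin d) => h p ^ (m+1)) :=
    sm_rpow_comp hsm (fun p => hpos p.1 p.2) (m+1)
  have hder := hasDerivAt_param (fun p => h p ^ (m+1)) hHsm t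
    (fun x => (m+1) * g x ^ m * deriv (fun s => h (s, x)) t) hD
  have hderiv_eq : deriv (fun s => ∫ x in fundDom d, h (s, x) ^ (m + 1)) t
      = ∫ x in fundDom d, (m+1) * g x ^ m * deriv (fun s => h (s, x)) t := hder.deriv
  -- rewrite the time derivative via the PDE
  have hVs : ∀ i : Fin d, ContDiff ℝ (⊤:ℕ∞) (fun y => g y * pder i (lap g) y) :=
    fun i => hgs.mul (contDiff_pder (sm_lap hgs) i)
  have hVp : ∀ i : Fin d, ZPeriodic (fun y => g y * pder i (lap g) y) := by
    intro i x k
    show g _ * pder i (lap g) _ = _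
    rw [hgp x k, (per_lap hgs hgp).pder_per (sm_lap hgs) i x k]
  have hpde : ∀ x, deriv (fun s => h (s, x)) t
      = -∑ i, pder i (fun y => g y * pder i (lap g) y) x := by
    intro x
    have := heq t ht x
    have e : (fun z => h (t, z)) = g := rfl
    rw [e] at this
    linarith [this]
  have contV : ∀ i : Fin d, Continuous (fun x => g x ^ m * pder i (fun y => g y * pder i (lap g) y) x) :=
    fun i => ((sm_rpow_comp hgs hgpos m).continuous.mul (contDiff_pder (hVs i) i).continuous)
  have step2 : (∫ x in fundDom d, (m+1) * g x ^ m * deriv (fun s => h (s, x)) t)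
      = -(m+1) * ∑ i, ∫ x in fundDom d, g x ^ m * pder i (fun y => g y * pder i (lap g) y) x := by
    have pt : ∀ x, (m+1) * g x ^ m * deriv (fun s => h (s, x)) t
        = ∑ i, (-(m+1)) * (g x ^ m * pder i (fun y => g y * pder i (lap g) y) x) := by
      intro x
      rw [hpde x, mul_neg, Finset.mul_sum, ← Finset.sum_neg_distrib]
      exact Finset.sum_congr rfl fun i _ => by ring
    rw [setIntegral_congr_fun measurableSet_fundDom (fun x _ => pt x),
      int_sum _ (fun i => (continuous_const.fun_mul (contV i)))]
    rw [Finset.mul_sum]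
    exact Finset.sum_congr rfl fun i _ => integral_const_mul _ _
  have step3 : ∀ i : Fin d, (∫ x in fundDom d, g x ^ m * pder i (fun y => g y * pder i (lap g) y) x)
      = -(m * ∫ x in fundDom d, g x ^ m * pder i g x * pder i (lap g) x) := by
    intro i
    have key := ibp (sm_rpow_comp hgs hgpos m) (hVs i)
      (by intro x k; show g _ ^ m = g x ^ m; rw [hgp x k]) (hVp i) i
    have lhs_eq : (∫ x in fundDom d, g x ^ m * pder i (fun y => g y * pder i (lap g) y) x)
        = ∫ x in fundDom d, (fun y => g y ^ m) x * pder i (fun y => g y * pder i (lap g) y) x := rfl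
    have pt : ∀ x, pder i (fun y => g y ^ m) x * (fun y => g y * pder i (lap g) y) x
        = m * (g x ^ m * pder i g x * pder i (lap g) x) := by
      intro x
      rw [pder_rpow i (hgs.diffb x) (hgpos x) m]
      have hgm : g x ^ (m-1) * g x = g x ^ m := by
        rw [show m = (m-1) + 1 by ring, Real.rpow_add_one (ne_of_gt (hgpos x))]
        ring_nf
      calc m * g x ^ (m-1) * pder i g x * (g x * pder i (lap g) x)
          = m * ((g x ^ (m-1) * g x) * pder i g x * pder i (lap g) x) := by ring
        _ = m * (g x ^ m * pder i g x * pder i (lap g) x) := by rw [hgm]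
    rw [lhs_eq, key, setIntegral_congr_fun measurableSet_fundDom (fun x _ => pt x),
      integral_const_mul]
  have step4 : deriv (fun s => ∫ x in fundDom d, h (s, x) ^ (m + 1)) t
      = m * (m+1) * ∑ i, ∫ x in fundDom d, g x ^ m * pder i g x * pder i (lap g) x := by
    rw [hderiv_eq, step2, Finset.sum_congr rfl (fun i _ => step3 i),
      Finset.sum_neg_distrib, ← Finset.mul_sum]
    ring
  -- conclude
  have hγ : (∫ x in fundDom d, h (t, x) ^ (m - 2) * (gradSq (fun z => h (t, z)) x) ^ 2)
      = ∫ x in fundDom d, g x ^ (m-2) * (gradSq g x)^2 := rfl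
  have hcore := core_ineq (m := m) hgs hgp hgpos
  rw [step4, hγ]
  have hsimp : (1 / (m * (m + 1))) * (m * (m+1)
        * ∑ i, ∫ x in fundDom d, g x ^ m * pder i g x * pder i (lap g) x)
      = ∑ i, ∫ x in fundDom d, g x ^ m * pder i g x * pder i (lap g) x := by
    field_simp
  rw [hsimp]
  linarith [hcore]
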